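/- Let E ⊆ ℂ be a nonempty closed set. Suppose there exist positive constants A, r₀ and η, with exp(−η·log(2/t)/log log(4/t)) increasing in t on (0, 2r₀), and an increasing function g : (0,∞) → (0,∞) satisfying g(t) = exp(−η·log(2/t)/log log(4/t)) for all t ∈ (0, 2r₀), such that Λ_g(E ∩ B̄(a,r)) ≥ A·g(2r) for every a ∈ E and every r ∈ (0, r₀), where B̄(a,r) is the closed disc of center a and radius r. Then E satisfies condition (U)_{2,β} for some β > 0. -/

import Mathlib

open Metric Set
open scoped ENNReal

/-- A set `E ⊆ ℂ` satisfies condition `(U)_{2,β}`. -/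
def CondU2 (E : Set ℂ) (β : ℝ) : Prop :=
  ∃ C > (0 : ℝ), ∃ r₀ > (0 : ℝ), ∀ a ∈ E, ∀ r ∈ Set.Ioo (0 : ℝ) r₀,
    ({z : ℂ | C * r * (Real.log (1 / r)) ^ (-β) ≤ dist z a ∧ dist z a ≤ r} ∩ E).Nonempty

/-- The `g`-Hausdorff content of `F ⊆ ℂ`:
`Λ_g(F) = inf { ∑ₖ g(diam Bₖ) : (Bₖ) a countable cover of F by closed discs }`. -/
noncomputable def hContent (g : ℝ → ℝ) (F : Set ℂ) : ℝ≥0∞ :=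
  ⨅ (B : ℕ → ℂ × ℝ) (_ : ∀ k, 0 ≤ (B k).2)
    (_ : F ⊆ ⋃ k, closedBall (B k).1 (B k).2),
    ∑' k, ENNReal.ofReal (g (diam (closedBall (B k).1 (B k).2)))

lemma diam_cb (a : ℂ) (ρ : ℝ) (hρ : 0 ≤ ρ) : diam (closedBall a ρ) = 2 * ρ := by
  refine le_antisymm (diam_closedBall hρ) ?_
  have h1 : a + (ρ : ℂ) ∈ closedBall a ρ := by
    simp [Complex.dist_eq, abs_of_nonneg hρ]
  have h2 : a - (ρ : ℂ) ∈ closedBall a ρ := by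
    simp [Complex.dist_eq, abs_of_nonneg hρ]
  have h3 := dist_le_diam_of_mem (isBounded_closedBall) h1 h2
  have h4 : dist (a + (ρ : ℂ)) (a - (ρ : ℂ)) = 2 * ρ := by
    rw [Complex.dist_eq]
    have : a + (ρ : ℂ) - (a - (ρ : ℂ)) = ((2 * ρ : ℝ) : ℂ) := by push_cast; ring
    rw [this, Complex.norm_real, Real.norm_eq_abs, abs_of_nonneg (by linarith)]
  linarith

lemma content_le (g : ℝ → ℝ) (a : ℂ) (ρ : ℝ) (hρ : 0 ≤ ρ) (F : Set ℂ)
    (hF : F ⊆ closedBall a ρ)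
    (hs : ∀ δ : ℝ, 0 < δ → ∃ t : ℝ, 0 ≤ t ∧ g (2 * t) ≤ δ) :
    hContent g F ≤ ENNReal.ofReal (g (2 * ρ)) := by
  apply ENNReal.le_of_forall_pos_le_add
  intro ε hε _
  choose t ht using fun k : ℕ => hs ((ε : ℝ) * (1/2) ^ (k + 2)) (by positivity)
  set B : ℕ → ℂ × ℝ := fun k => Nat.casesOn k (a, ρ) (fun j => (a, t j)) with hB
  have hb : ∀ k, 0 ≤ (B k).2 := by
    rintro (_ | k)
    · exact hρ
    · exact (ht k).1
  have hcov : F ⊆ ⋃ k, closedBall (B k).1 (B k).2 := fun z hz =>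
    mem_iUnion.mpr ⟨0, hF hz⟩
  have h1 : hContent g F ≤ ∑' k, ENNReal.ofReal (g (diam (closedBall (B k).1 (B k).2))) :=
    iInf_le_of_le B (iInf_le_of_le hb (iInf_le _ hcov))
  refine h1.trans ?_
  have h2 : ∀ k, ENNReal.ofReal (g (diam (closedBall (B k).1 (B k).2)))
      ≤ (if k = 0 then ENNReal.ofReal (g (2 * ρ)) else 0) + (ε : ℝ≥0∞) * 2⁻¹ ^ (k + 1) := by
    rintro (_ | j)
    · show ENNReal.ofReal (g (diam (closedBall a ρ))) ≤ _
      rw [diam_cb a ρ hρ, if_pos rfl]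
      exact le_self_add
    · have hd : diam (closedBall a (t j)) = 2 * t j := diam_cb a (t j) (ht j).1
      show ENNReal.ofReal (g (diam (closedBall a (t j)))) ≤ _
      rw [hd, if_neg (Nat.succ_ne_zero j), zero_add]
      calc ENNReal.ofReal (g (2 * t j)) ≤ ENNReal.ofReal ((ε : ℝ) * (1/2) ^ (j + 2)) :=
            ENNReal.ofReal_le_ofReal (ht j).2
        _ = (ε : ℝ≥0∞) * 2⁻¹ ^ (j + 2) := by
            rw [ENNReal.ofReal_mul ε.coe_nonneg, ENNReal.ofReal_coe_nnreal,
              ENNReal.ofReal_pow (by norm_num : (0:ℝ) ≤ 1/2), one_div,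
              ENNReal.ofReal_inv_of_pos (by norm_num : (0:ℝ) < 2)]
            norm_num
  calc ∑' k, ENNReal.ofReal (g (diam (closedBall (B k).1 (B k).2)))
      ≤ ∑' k, ((if k = 0 then ENNReal.ofReal (g (2 * ρ)) else 0) + (ε : ℝ≥0∞) * 2⁻¹ ^ (k + 1)) :=
        ENNReal.tsum_le_tsum h2
    _ = (∑' k : ℕ, if k = 0 then ENNReal.ofReal (g (2 * ρ)) else 0)
        + ∑' k : ℕ, (ε : ℝ≥0∞) * 2⁻¹ ^ (k + 1) := ENNReal.tsum_add
    _ = ENNReal.ofReal (g (2 * ρ)) + (ε : ℝ≥0∞) := by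
        congr 1
        · exact tsum_ite_eq 0 _
        · have : ∑' k : ℕ, (2⁻¹ : ℝ≥0∞) ^ (k + 1) = 1 := by
            simp only [pow_succ]
            rw [ENNReal.tsum_mul_right, ENNReal.tsum_geometric]
            norm_num [ENNReal.mul_inv_cancel]
          rw [ENNReal.tsum_mul_left, this, mul_one]

lemma log_le_two_sqrt {z : ℝ} (hz : 0 < z) : Real.log z ≤ 2 * Real.sqrt z := by
  have h1 : Real.log z = 2 * Real.log (Real.sqrt z) := by
    rw [Real.log_sqrt hz.le]; ring
  have h2 := Real.log_le_sub_one_of_pos (Real.sqrt_pos.mpr hz)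
  nlinarith [Real.sqrt_nonneg z]

lemma g_small (r₀ η : ℝ) (hr₀ : 0 < r₀) (hη : 0 < η) (g : ℝ → ℝ)
    (hgeq : ∀ t ∈ Set.Ioo (0 : ℝ) (2 * r₀),
      g t = Real.exp (-η * (Real.log (2 / t) / Real.log (Real.log (4 / t))))) :
    ∀ δ : ℝ, 0 < δ → ∃ t : ℝ, 0 < t ∧ t < r₀ ∧ g (2 * t) ≤ δ := by
  intro δ hδ
  set M : ℝ := max 0 (-Real.log δ) with hM
  have hM0 : 0 ≤ M := le_max_left _ _
  set y : ℝ := max (16 * (M / η) ^ 2 + 1) (Real.log (1 / r₀) + 1) with hy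
  have hy1 : 1 ≤ y := le_trans (by nlinarith [sq_nonneg (M / η)]) (le_max_left _ _)
  have hylog : Real.log (1 / r₀) < y := lt_of_lt_of_le (lt_add_one _) (le_max_right _ _)
  refine ⟨Real.exp (-y), Real.exp_pos _, ?_, ?_⟩
  · have : Real.exp (-y) < Real.exp (- Real.log (1 / r₀)) := by
      exact Real.exp_lt_exp.mpr (by linarith)
    calc Real.exp (-y) < Real.exp (-Real.log (1 / r₀)) := this
      _ = r₀ := by rw [← Real.log_inv, Real.exp_log (by positivity)]; simp
  · have ht0 : (0 : ℝ) < Real.exp (-y) := Real.exp_pos _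
    have htr : Real.exp (-y) < r₀ := by
      calc Real.exp (-y) < Real.exp (-Real.log (1 / r₀)) := Real.exp_lt_exp.mpr (by linarith)
        _ = r₀ := by rw [← Real.log_inv, Real.exp_log (by positivity)]; simp
    have hmem : 2 * Real.exp (-y) ∈ Set.Ioo (0 : ℝ) (2 * r₀) := ⟨by positivity, by linarith⟩
    rw [hgeq _ hmem]
    have e1 : (2 : ℝ) / (2 * Real.exp (-y)) = Real.exp y := by
      rw [Real.exp_neg]; field_simp
    have e2 : (4 : ℝ) / (2 * Real.exp (-y)) = 2 * Real.exp y := by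
      rw [Real.exp_neg]; field_simp; ring
    rw [e1, e2, Real.log_exp, Real.log_mul two_ne_zero (Real.exp_ne_zero _), Real.log_exp]
    set L : ℝ := Real.log (Real.log 2 + y) with hL
    have hl2 : (0 : ℝ) < Real.log 2 := Real.log_pos (by norm_num)
    have hLpos : 0 < L := Real.log_pos (by linarith)
    have hsy : 0 < Real.sqrt y := Real.sqrt_pos.mpr (by linarith)
    have hL3 : L ≤ 3 * Real.sqrt y := by
      have h1 : L ≤ 2 * Real.sqrt (Real.log 2 + y) := log_le_two_sqrt (by linarith)
      have h2 : Real.sqrt (Real.log 2 + y) ≤ Real.sqrt (2 * y) := by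
        apply Real.sqrt_le_sqrt
        have := Real.log_two_lt_d9
        linarith
      have h3 : Real.sqrt (2 * y) ≤ (3 / 2) * Real.sqrt y := by
        have h3a : Real.sqrt (2 * y) ≤ Real.sqrt (((3/2) * Real.sqrt y) ^ 2) :=
          Real.sqrt_le_sqrt (by
            rw [mul_pow, Real.sq_sqrt (by linarith : (0:ℝ) ≤ y)]; nlinarith)
        rwa [Real.sqrt_sq (by positivity)] at h3a
      linarith
    have hQ : M / η ≤ y / L := by
      have hy0 : (0 : ℝ) ≤ y := by linarith
      have h4 : M / η ≤ Real.sqrt y / 3 := by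
        have h4a : (3 * (M / η)) ^ 2 ≤ y := by
          have : 16 * (M / η) ^ 2 + 1 ≤ y := le_max_left _ _
          nlinarith [sq_nonneg (M / η)]
        have h4b : 3 * (M / η) ≤ Real.sqrt y := by
          nlinarith [Real.sq_sqrt hy0, Real.sqrt_nonneg y]
        linarith
      have h8 : y / (3 * Real.sqrt y) ≤ y / L := by gcongr
      have h9 : y / (3 * Real.sqrt y) = Real.sqrt y / 3 := by
        rw [div_eq_div_iff (by positivity) (by norm_num : (3:ℝ) ≠ 0)]
        nlinarith [Real.mul_self_sqrt hy0]
      linarith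
    have h5 : -Real.log δ ≤ η * (y / L) := by
      have h6 : M ≤ η * (y / L) := by
        calc M = η * (M / η) := by field_simp
          _ ≤ η * (y / L) := by
            exact mul_le_mul_of_nonneg_left hQ hη.le
      calc -Real.log δ ≤ M := le_max_right _ _
        _ ≤ η * (y / L) := h6
    calc Real.exp (-η * (y / L)) ≤ Real.exp (Real.log δ) := Real.exp_le_exp.mpr (by linarith)
      _ = δ := Real.exp_log hδ

lemma core_ineq (β x : ℝ) (hβ : 0 < β) (hx2 : Real.exp 2 + β + 2 ≤ x) :
    β / 4 ≤ (x + β * Real.log x) / Real.log (x + Real.log 2 + β * Real.log x)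
      - x / Real.log (x + Real.log 2) := by
  have hl2 : (0:ℝ) < Real.log 2 := Real.log_pos (by norm_num)
  have hl21 : Real.log 2 < 1 := by
    have := Real.log_two_lt_d9; linarith
  have he2 : (1:ℝ) < Real.exp 2 := by
    have := Real.add_one_le_exp (2:ℝ); linarith
  have hx1 : (1:ℝ) < x := by linarith
  have hx0 : (0:ℝ) < x := by linarith
  set lx := Real.log x with hlx
  have hlx2 : 2 ≤ lx := by
    rw [hlx, Real.le_log_iff_exp_le hx0]; linarith
  have hlxx : lx < x := by
    have := Real.log_le_sub_one_of_pos hx0; linarith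
  set u := x + Real.log 2 with hu
  set v := x + Real.log 2 + β * lx with hv
  have hu0 : (0:ℝ) < u := by linarith
  have huv : u ≤ v := by nlinarith
  have hv0 : (0:ℝ) < v := lt_of_lt_of_le hu0 huv
  set lu := Real.log u with hlu
  set lv := Real.log v with hlv
  have hlu2 : 2 ≤ lu := by
    rw [hlu, Real.le_log_iff_exp_le hu0]; linarith
  have hlu0 : (0:ℝ) < lu := by linarith
  have hluv : lu ≤ lv := Real.log_le_log hu0 huv
  have hlv0 : (0:ℝ) < lv := by linarith
  have step1 : lv - lu ≤ β * lx / x := by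
    have e1 : lv - lu = Real.log (v / u) := by
      rw [Real.log_div (ne_of_gt hv0) (ne_of_gt hu0)]
    have e2 : Real.log (v / u) ≤ v / u - 1 :=
      Real.log_le_sub_one_of_pos (by positivity)
    have e3 : v / u - 1 = β * lx / u := by
      field_simp
      simp only [hu, hv]; ring
    have e4 : β * lx / u ≤ β * lx / x := by
      apply div_le_div_of_nonneg_left (by nlinarith) hx0
      linarith
    linarith
  have hlv2lx : lv ≤ 2 * lx := by
    have e1 : v ≤ (β + 2) * x := by nlinarith
    have e2 : lv ≤ Real.log ((β + 2) * x) := Real.log_le_log hv0 e1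
    have e3 : Real.log ((β + 2) * x) = Real.log (β + 2) + lx := by
      rw [Real.log_mul (by positivity) (ne_of_gt hx0)]
    have e4 : Real.log (β + 2) ≤ lx := Real.log_le_log (by positivity) (by linarith)
    linarith
  have hnum : β * lx * (lu - 1) ≤ (x + β * lx) * lu - lv * x := by
    have e1 : x * (lv - lu) ≤ β * lx := by
      have := mul_le_mul_of_nonneg_left step1 hx0.le
      have e2 : x * (β * lx / x) = β * lx := by field_simp
      linarith [this, e2.le]
    nlinarith
  have hD : (x + β * lx) / lv - x / lu = ((x + β * lx) * lu - lv * x) / (lv * lu) :=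
    div_sub_div _ _ (ne_of_gt hlv0) (ne_of_gt hlu0)
  rw [hD]
  have hfinal : β / 4 ≤ (β * lx * (lu - 1)) / (lv * lu) := by
    rw [div_le_div_iff₀ (by norm_num) (by positivity)]
    nlinarith [mul_le_mul_of_nonneg_right hlv2lx hlu0.le]
  refine hfinal.trans ?_
  apply div_le_div_of_nonneg_right hnum (by positivity) |>.trans_eq rfl

/-- If, for some `A, r₀, η > 0` with `exp(−η·log(2/t)/log log(4/t))`
increasing on `(0, 2r₀)`, an increasing function `g : (0,∞) → (0,∞)` agreeing
with that function on `(0, 2r₀)` satisfies `Λ_g(E ∩ B̄(a,r)) ≥ A·g(2r)` for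
all `a ∈ E`, `r ∈ (0, r₀)`, then the nonempty closed set `E` satisfies
`(U)_{2,β}` for some `β > 0`. -/
theorem stmt_16 (E : Set ℂ) (hne : E.Nonempty) (hcl : IsClosed E)
    (A r₀ η : ℝ) (hA : 0 < A) (hr₀ : 0 < r₀) (hη : 0 < η)
    (hmono : MonotoneOn
      (fun t : ℝ => Real.exp (-η * (Real.log (2 / t) / Real.log (Real.log (4 / t)))))
      (Set.Ioo (0 : ℝ) (2 * r₀)))
    (g : ℝ → ℝ) (hgpos : ∀ t ∈ Set.Ioi (0 : ℝ), 0 < g t)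
    (hgmono : MonotoneOn g (Set.Ioi (0 : ℝ)))
    (hgeq : ∀ t ∈ Set.Ioo (0 : ℝ) (2 * r₀),
      g t = Real.exp (-η * (Real.log (2 / t) / Real.log (Real.log (4 / t)))))
    (hcont : ∀ a ∈ E, ∀ r ∈ Set.Ioo (0 : ℝ) r₀,
      ENNReal.ofReal (A * g (2 * r)) ≤ hContent g (E ∩ closedBall a r)) :
    ∃ β > (0 : ℝ), CondU2 E β := by
  set β := 4 * max 0 (-Real.log A) / η + 4 with hβdef
  have hβ : 0 < β := by positivity
  have hkey : -Real.log A < η * (β / 4) := by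
    have h1 : η * (β / 4) = max 0 (-Real.log A) + η := by
      rw [hβdef]; field_simp
    have h2 := le_max_right 0 (-Real.log A)
    linarith
  set x₀ := Real.exp 2 + β + 2 with hx₀
  have hx₀0 : 0 < x₀ := by positivity
  set R := min r₀ (Real.exp (-x₀)) with hRdef
  have hR0 : 0 < R := lt_min hr₀ (Real.exp_pos _)
  refine ⟨β, hβ, 1, one_pos, R, hR0, ?_⟩
  intro a ha r hr
  by_contra hempty
  obtain ⟨hr0, hrR⟩ := hr
  set x := Real.log (1 / r) with hx
  set ρ := r * x ^ (-β) with hρdef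
  have hrr₀ : r < r₀ := lt_of_lt_of_le hrR (min_le_left _ _)
  have hlogr : Real.log r = -x := by rw [hx, one_div, Real.log_inv]; ring
  have hxx₀ : x₀ < x := by
    have h1 : r < Real.exp (-x₀) := hrR.trans_le (min_le_right _ _)
    have h2 := Real.log_lt_log hr0 h1
    rw [Real.log_exp] at h2
    linarith
  have he2 : (1:ℝ) < Real.exp 2 := by
    have := Real.add_one_le_exp (2:ℝ); linarith
  have hx1 : (1:ℝ) ≤ x := by rw [hx₀] at hxx₀; linarith
  have hx0' : (0:ℝ) < x := by linarith
  have hrpow : 0 < x ^ (-β) := Real.rpow_pos_of_pos hx0' _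
  have hρpos : 0 < ρ := mul_pos hr0 hrpow
  have hρr : ρ ≤ r := by
    have h1 : x ^ (-β) ≤ 1 := Real.rpow_le_one_of_one_le_of_nonpos hx1 (by linarith)
    rw [hρdef]
    nlinarith
  -- from emptiness of the annulus, E ∩ B̄(a,r) ⊆ B̄(a,ρ)
  have hsub : E ∩ closedBall a r ⊆ closedBall a ρ := by
    rintro z ⟨hzE, hzB⟩
    have hdist : dist z a ≤ r := mem_closedBall.mp hzB
    by_contra hc
    have hlt : ρ < dist z a := lt_of_not_ge (fun h => hc (mem_closedBall.mpr h))
    exact hempty ⟨z, ⟨(by rw [one_mul]; exact hlt.le : 1 * r * x ^ (-β) ≤ dist z a), hdist⟩, hzE⟩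
  have hcb := hcont a ha r ⟨hr0, hrr₀⟩
  have hsg : ∀ δ : ℝ, 0 < δ → ∃ t : ℝ, 0 ≤ t ∧ g (2 * t) ≤ δ := by
    intro δ hδ
    obtain ⟨t, h1, _, h3⟩ := g_small r₀ η hr₀ hη g hgeq δ hδ
    exact ⟨t, h1.le, h3⟩
  have hub : hContent g (E ∩ closedBall a r) ≤ ENNReal.ofReal (g (2 * ρ)) :=
    content_le g a ρ hρpos.le _ hsub hsg
  have hle : A * g (2 * r) ≤ g (2 * ρ) := by
    have h := hcb.trans hub
    rwa [ENNReal.ofReal_le_ofReal_iff (hgpos _ (mem_Ioi.mpr (by linarith))).le] at h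
  -- compute the two values of g
  have h2r : (2 * r) ∈ Set.Ioo (0:ℝ) (2 * r₀) := ⟨by linarith, by linarith⟩
  have h2ρ : (2 * ρ) ∈ Set.Ioo (0:ℝ) (2 * r₀) := ⟨by linarith, by linarith⟩
  have hgr : g (2 * r) = Real.exp (-η * (x / Real.log (x + Real.log 2))) := by
    rw [hgeq _ h2r]
    have e1 : Real.log (2 / (2 * r)) = x := by
      rw [show (2:ℝ) / (2 * r) = 1 / r by field_simp]
    have e2 : Real.log (4 / (2 * r)) = x + Real.log 2 := by
      rw [show (4:ℝ) / (2 * r) = 2 / r by rw [div_eq_div_iff (by linarith) (by linarith)]; ring,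
        Real.log_div two_ne_zero (ne_of_gt hr0), hlogr]
      ring
    rw [e1, e2]
  have hlogρ : Real.log ρ = -x - β * Real.log x := by
    rw [hρdef, Real.log_mul (ne_of_gt hr0) (ne_of_gt hrpow), Real.log_rpow hx0', hlogr]
    ring
  have hgρ : g (2 * ρ) = Real.exp (-η * ((x + β * Real.log x) /
      Real.log (x + Real.log 2 + β * Real.log x))) := by
    rw [hgeq _ h2ρ]
    have e1 : Real.log (2 / (2 * ρ)) = x + β * Real.log x := by
      rw [show (2:ℝ) / (2 * ρ) = 1 / ρ by field_simp, one_div, Real.log_inv, hlogρ]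
      ring
    have e2 : Real.log (4 / (2 * ρ)) = x + Real.log 2 + β * Real.log x := by
      rw [show (4:ℝ) / (2 * ρ) = 2 / ρ by rw [div_eq_div_iff (by linarith) (by linarith)]; ring,
        Real.log_div two_ne_zero (ne_of_gt hρpos), hlogρ]
      ring
    rw [e1, e2]
  have hcore := core_ineq β x hβ (by rw [hx₀] at hxx₀; linarith)
  have hcontr : g (2 * ρ) < A * g (2 * r) := by
    rw [hgr, hgρ, show A = Real.exp (Real.log A) from (Real.exp_log hA).symm, ← Real.exp_add]
    apply Real.exp_lt_exp.mpr
    have h1 := mul_le_mul_of_nonneg_left hcore hη.le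
    nlinarith [h1, hkey]
  exact absurd hle (not_le.mpr hcontr)
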